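/- Fix an integer n ≥ 4, set μ = (n−2+√(n²−4n))/2, and let s₁, s₂, s₃, … be a sequence of real numbers satisfying the characteristic recursion s_{j+1} = (n−2)s_j − s_{j−1} for all j ≥ 2. Then s₁ > 0 and μs₂ − s₁ ≥ 0 if and only if s_j > 0 for every j ≥ 1. -/

import Mathlib

/-- Fix an integer `n ≥ 4`, set `μ = (n−2+√(n²−4n))/2`, and let `s₁, s₂, …` be a
sequence of real numbers with `s_{j+1} = (n−2)s_j − s_{j−1}` for all `j ≥ 2`.
Then `s₁ > 0` and `μs₂ − s₁ ≥ 0` iff `s_j > 0` for every `j ≥ 1`. -/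
theorem stmt_1 (n : ℤ) (hn : 4 ≤ n) (μ : ℝ)
    (hμ : μ = ((n : ℝ) - 2 + Real.sqrt ((n : ℝ) ^ 2 - 4 * (n : ℝ))) / 2)
    (s : ℕ → ℝ)
    (hrec : ∀ j : ℕ, 2 ≤ j → s (j + 1) = ((n : ℝ) - 2) * s j - s (j - 1)) :
    (0 < s 1 ∧ 0 ≤ μ * s 2 - s 1) ↔ (∀ j : ℕ, 1 ≤ j → 0 < s j) := by
  have hn' : (4:ℝ) ≤ (n:ℝ) := by exact_mod_cast hn
  have hD : (0:ℝ) ≤ (n:ℝ)^2 - 4*(n:ℝ) := by nlinarith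
  have hsq : Real.sqrt ((n:ℝ)^2 - 4*(n:ℝ)) ^ 2 = (n:ℝ)^2 - 4*(n:ℝ) :=
    Real.sq_sqrt hD
  have hsqnn : 0 ≤ Real.sqrt ((n:ℝ)^2 - 4*(n:ℝ)) := Real.sqrt_nonneg _
  have hμ1 : 1 ≤ μ := by rw [hμ]; nlinarith
  have hμ0 : (0:ℝ) < μ := by linarith
  have hchar : μ^2 = ((n:ℝ) - 2) * μ - 1 := by rw [hμ]; nlinarith [hsq]
  constructor
  · rintro ⟨h1, h2⟩
    have key : ∀ j : ℕ, 0 < s (j+1) ∧ 0 ≤ μ * s (j+2) - s (j+1) := by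
      intro j
      induction j with
      | zero => exact ⟨h1, h2⟩
      | succ k ih =>
        obtain ⟨hp, htk⟩ := ih
        have hs : 0 < s (k+2) := by nlinarith
        refine ⟨hs, ?_⟩
        have hr := hrec (k+2) (by omega)
        rw [show k + 2 - 1 = k + 1 by omega] at hr
        have heq : μ * s (k+3) - s (k+2) = μ * (μ * s (k+2) - s (k+1)) := by
          have hr' : s (k+3) = ((n:ℝ) - 2) * s (k+2) - s (k+1) := hr
          rw [hr']; nlinarith [hchar]
        rw [show k+1+2 = k+3 from rfl, show k+1+1 = k+2 from rfl, heq]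
        exact mul_nonneg hμ0.le htk
    intro j hj
    obtain ⟨k, rfl⟩ : ∃ k, j = k + 1 := ⟨j - 1, by omega⟩
    exact (key k).1
  · intro hpos
    refine ⟨hpos 1 le_rfl, ?_⟩
    by_contra hneg
    push_neg at hneg
    set t := μ * s 2 - s 1 with ht
    have htneg : t < 0 := by linarith
    -- the "discrepancy" grows geometrically: μ s_{j+2} − s_{j+1} = μ^j t
    have hT : ∀ j : ℕ, μ * s (j+2) - s (j+1) = μ^j * t := by
      intro j
      induction j with
      | zero => simp [ht]
      | succ k ih =>
        have hr := hrec (k+2) (by omega)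
        rw [show k + 2 - 1 = k + 1 by omega] at hr
        have hr' : s (k+3) = ((n:ℝ) - 2) * s (k+2) - s (k+1) := hr
        have : μ * s (k+3) - s (k+2) = μ * (μ * s (k+2) - s (k+1)) := by
          rw [hr']; linear_combination (-(s (k+2))) * hchar
        rw [show k+1+2 = k+3 from rfl, show k+1+1 = k+2 from rfl, this, ih]
        ring
    -- hence s decreases by at least |t| each step
    have hu : ∀ j : ℕ, s (j+1) ≤ s 1 + j * t := by
      intro j
      induction j with
      | zero => simp
      | succ k ih =>
        have hTk := hT k
        have hμk : (1:ℝ) ≤ μ^k := one_le_pow₀ hμ1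
        have hsk2 : 0 < s (k+2) := hpos (k+2) (by omega)
        have h1' : μ^k * t ≤ t := by nlinarith
        have h2' : s (k+2) ≤ μ * s (k+2) := by nlinarith
        have : s (k+2) ≤ s (k+1) + t := by nlinarith
        push_cast
        rw [show k+1+1 = k+2 from rfl]
        nlinarith [ih]
    obtain ⟨j, hj⟩ := exists_nat_gt (s 1 / (-t))
    have hjt : s 1 + j * t < 0 := by
      have : s 1 < j * (-t) := (div_lt_iff₀ (by linarith)).mp hj
      nlinarith
    have := hu j
    have := hpos (j+1) (by omega)
    linarith
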